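/- Let Ω be a measurable space with a finite nonatomic measure and V: Ω → ℝ measurable with esssup V − essinf V > β. Then sup { ∫ PV − (β/2) ∫ |P| : P ∈ L²(Ω), ∫ P = 0 } = +∞. -/

import Mathlib

set_option maxHeartbeats 800000

open MeasureTheory Set

lemma univ_null_of_all_null {Ω : Type*} [MeasurableSpace Ω] (μ : Measure Ω)
    (V : Ω → ℝ) (h : ∀ a : ℝ, μ {x | a < V x} = 0) : μ = 0 := by
  rw [← Measure.measure_univ_eq_zero]
  have hsub : (Set.univ : Set Ω) ⊆ ⋃ n : ℕ, {x | -(n:ℝ) < V x} := by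
    intro x _
    obtain ⟨n, hn⟩ := exists_nat_gt (-V x)
    exact Set.mem_iUnion.2 ⟨n, by simpa using neg_lt.mp (by linarith)⟩
  exact measure_mono_null hsub (measure_iUnion_null fun n => h _)

lemma meas_pos_of_lt_essSup' {Ω : Type*} [MeasurableSpace Ω] {μ : Measure Ω}
    (hμ : μ ≠ 0) {V : Ω → ℝ} {r : ℝ} (hr : r < essSup V μ) : μ {x | r < V x} ≠ 0 := by
  intro h0
  have hmem : r ∈ {a : ℝ | μ {x | a < V x} = 0} := h0
  have hbdd : BddBelow {a : ℝ | μ {x | a < V x} = 0} := by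
    by_contra hnb
    refine hμ (univ_null_of_all_null μ V fun a => ?_)
    obtain ⟨b, hb, hba⟩ := not_bddBelow_iff.mp hnb a
    exact measure_mono_null (fun x hx => lt_trans hba hx) hb
  have := csInf_le hbdd hmem
  rw [essSup_eq_sInf] at hr
  linarith

lemma meas_pos_of_essInf_lt' {Ω : Type*} [MeasurableSpace Ω] {μ : Measure Ω}
    (hμ : μ ≠ 0) {V : Ω → ℝ} {r : ℝ} (hr : essInf V μ < r) : μ {x | V x < r} ≠ 0 := by
  intro h0
  have hmem : r ∈ {a : ℝ | μ {x | V x < a} = 0} := h0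
  have hbdd : BddAbove {a : ℝ | μ {x | V x < a} = 0} := by
    by_contra hnb
    refine hμ (univ_null_of_all_null μ (fun x => -V x) fun a => ?_)
    obtain ⟨b, hb, hba⟩ := not_bddAbove_iff.mp hnb (-a)
    exact measure_mono_null (fun x hx => lt_trans (by have : a < -V x := hx; linarith) hba) hb
  have := le_csSup hbdd hmem
  rw [essInf_eq_sSup] at hr
  linarith

theorem sup_pairing_eq_top_of_large_oscillation
    {Ω : Type*} [MeasurableSpace Ω] (μ : Measure Ω) [IsFiniteMeasure μ]
    [NullSingletonClass μ]
    (β : ℝ) (hβ : 0 < β)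
    (V : Ω → ℝ) (hV : AEMeasurable V μ)
    (hVosc : β < essSup V μ - essInf V μ) :
    ∀ c : ℝ, ∃ P : Ω → ℝ, MemLp P 2 μ ∧ (∫ x, P x ∂μ = 0) ∧
      c < (∫ x, P x * V x ∂μ) - β / 2 * ∫ x, |P x| ∂μ := by
  intro c
  -- μ ≠ 0
  have hμ0 : μ ≠ 0 := by
    rintro rfl
    rw [essSup_eq_sInf, essInf_eq_sSup] at hVosc
    simp only [Measure.coe_zero, Pi.zero_apply, Set.setOf_true] at hVosc
    rw [Real.sSup_univ, Real.sInf_of_not_bddBelow (by simpa using not_bddBelow_univ)] at hVosc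
    linarith
  -- measurable representative
  set W : Ω → ℝ := hV.mk V with hWdef
  have hWm : Measurable W := hV.measurable_mk
  have hVW : V =ᵐ[μ] W := hV.ae_eq_mk
  have hoscW : β < essSup W μ - essInf W μ := by
    rwa [essSup_congr_ae hVW, essInf_congr_ae hVW] at hVosc
  set M := essSup W μ
  set m := essInf W μ
  set δ : ℝ := (M - m - β) / 3 with hδdef
  have hδ : 0 < δ := by simp only [hδdef]; linarith
  set s : ℝ := M - δ with hsdef
  set t : ℝ := m + δ with htdef
  have hst : s - t = β + δ := by simp only [hsdef, htdef, hδdef]; ring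
  have hA0 : μ {x | s < W x} ≠ 0 :=
    meas_pos_of_lt_essSup' hμ0 (by simp only [hsdef]; linarith)
  have hB0 : μ {x | W x < t} ≠ 0 :=
    meas_pos_of_essInf_lt' hμ0 (by simp only [htdef]; linarith)
  -- truncate to bounded slices of positive measure
  have hAex : ∃ n : ℕ, μ (W ⁻¹' Set.Ioc s (s + (n + 1))) ≠ 0 := by
    by_contra hall
    push_neg at hall
    apply hA0
    refine measure_mono_null (fun x hx => Set.mem_iUnion.2 ?_) (measure_iUnion_null hall)
    obtain ⟨n, hn⟩ := exists_nat_gt (W x - s)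
    exact ⟨n, Set.mem_preimage.2 ⟨hx, by push_cast; linarith⟩⟩
  have hBex : ∃ n : ℕ, μ (W ⁻¹' Set.Ico (t - (n + 1)) t) ≠ 0 := by
    by_contra hall
    push_neg at hall
    apply hB0
    refine measure_mono_null (fun x hx => Set.mem_iUnion.2 ?_) (measure_iUnion_null hall)
    obtain ⟨n, hn⟩ := exists_nat_gt (t - W x)
    exact ⟨n, Set.mem_preimage.2 ⟨by push_cast; linarith, hx⟩⟩
  obtain ⟨nA, hnA⟩ := hAex
  obtain ⟨nB, hnB⟩ := hBex
  set A : Set Ω := W ⁻¹' Set.Ioc s (s + (nA + 1)) with hAdef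
  set B : Set Ω := W ⁻¹' Set.Ico (t - (nB + 1)) t with hBdef
  have hAmeas : MeasurableSet A := hWm measurableSet_Ioc
  have hBmeas : MeasurableSet B := hWm measurableSet_Ico
  set a : ℝ := (μ A).toReal with hadef
  set b : ℝ := (μ B).toReal with hbdef
  have ha : 0 < a := ENNReal.toReal_pos hnA (measure_ne_top μ A)
  have hb : 0 < b := ENNReal.toReal_pos hnB (measure_ne_top μ B)
  set L : ℝ := (|c| + 1) / (a * b * δ) with hLdef
  have habδ : 0 < a * b * δ := by positivity
  have hL : 0 < L := by positivity
  set P : Ω → ℝ := fun x =>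
    L * (b * A.indicator (fun _ => (1:ℝ)) x - a * B.indicator (fun _ => (1:ℝ)) x) with hPdef
  -- basic integrability facts
  have intA : Integrable (A.indicator fun _ => (1:ℝ)) μ := (integrable_const 1).indicator hAmeas
  have intB : Integrable (B.indicator fun _ => (1:ℝ)) μ := (integrable_const 1).indicator hBmeas
  have intP : Integrable P μ := (((intA.const_mul b).sub (intB.const_mul a)).const_mul L)
  have hPmeas : Measurable P :=
    (((measurable_const.indicator hAmeas).const_mul b).sub
      ((measurable_const.indicator hBmeas).const_mul a)).const_mul L
  have hiA : ∀ x, 0 ≤ A.indicator (fun _ => (1:ℝ)) x ∧ A.indicator (fun _ => (1:ℝ)) x ≤ 1 := by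
    intro x; by_cases hx : x ∈ A
    · rw [Set.indicator_of_mem hx]; norm_num
    · rw [Set.indicator_of_notMem hx]; norm_num
  have hiB : ∀ x, 0 ≤ B.indicator (fun _ => (1:ℝ)) x ∧ B.indicator (fun _ => (1:ℝ)) x ≤ 1 := by
    intro x; by_cases hx : x ∈ B
    · rw [Set.indicator_of_mem hx]; norm_num
    · rw [Set.indicator_of_notMem hx]; norm_num
  refine ⟨P, ?_, ?_, ?_⟩
  · -- MemLp
    refine MemLp.of_bound hPmeas.aestronglyMeasurable (L * (b + a)) (ae_of_all _ fun x => ?_)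
    obtain ⟨hu0, hu1⟩ := hiA x
    obtain ⟨hv0, hv1⟩ := hiB x
    simp only [hPdef]
    rw [Real.norm_eq_abs, abs_le]
    constructor <;>
      nlinarith [mul_nonneg hL.le hb.le, mul_nonneg hL.le ha.le, hu0, hu1, hv0, hv1]
  · -- integral zero
    simp only [hPdef]
    rw [integral_const_mul, integral_sub (intA.const_mul b) (intB.const_mul a),
      integral_const_mul, integral_const_mul, integral_indicator_const _ hAmeas,
      integral_indicator_const _ hBmeas]
    simp only [smul_eq_mul, mul_one, measureReal_def, ← hadef, ← hbdef]
    ring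
  · -- the main inequality
    -- bound ∫ |P|
    have habs_le : ∀ x, |P x| ≤ L * b * A.indicator (fun _ => (1:ℝ)) x
        + L * a * B.indicator (fun _ => (1:ℝ)) x := by
      intro x
      obtain ⟨hu0, hu1⟩ := hiA x
      obtain ⟨hv0, hv1⟩ := hiB x
      simp only [hPdef]
      rw [abs_le]
      constructor <;>
        nlinarith [mul_nonneg hL.le hb.le, mul_nonneg hL.le ha.le, hu0, hu1, hv0, hv1]
    have hIabs : ∫ x, |P x| ∂μ ≤ L * b * a + L * a * b := by
      have h1 : ∫ x, |P x| ∂μ ≤ ∫ x, (L * b * A.indicator (fun _ => (1:ℝ)) x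
          + L * a * B.indicator (fun _ => (1:ℝ)) x) ∂μ :=
        integral_mono intP.abs ((intA.const_mul (L*b)).add (intB.const_mul (L*a))) habs_le
      rw [integral_add (intA.const_mul (L*b)) (intB.const_mul (L*a)),
        integral_const_mul, integral_const_mul, integral_indicator_const _ hAmeas,
        integral_indicator_const _ hBmeas] at h1
      simpa only [smul_eq_mul, mul_one, measureReal_def, ← hadef, ← hbdef] using h1
    -- indicator * W is integrable
    have bndA : ∀ x, ‖A.indicator W x‖ ≤ |s| + (nA + 1) := by
      intro x
      rw [Real.norm_eq_abs]
      by_cases hx : x ∈ A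
      · rw [Set.indicator_of_mem hx]
        obtain ⟨h1, h2⟩ := hx
        rw [abs_le]
        constructor <;> nlinarith [neg_abs_le s, le_abs_self s, abs_nonneg s]
      · rw [Set.indicator_of_notMem hx, abs_zero]; positivity
    have bndB : ∀ x, ‖B.indicator W x‖ ≤ |t| + (nB + 1) := by
      intro x
      rw [Real.norm_eq_abs]
      by_cases hx : x ∈ B
      · rw [Set.indicator_of_mem hx]
        obtain ⟨h1, h2⟩ := hx
        rw [abs_le]
        constructor <;> nlinarith [neg_abs_le t, le_abs_self t, abs_nonneg t]
      · rw [Set.indicator_of_notMem hx, abs_zero]; positivity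
    have intAW : Integrable (A.indicator W) μ :=
      memLp_one_iff_integrable.mp <| MemLp.of_bound
        (hWm.indicator hAmeas).aestronglyMeasurable _ (ae_of_all _ bndA)
    have intBW : Integrable (B.indicator W) μ :=
      memLp_one_iff_integrable.mp <| MemLp.of_bound
        (hWm.indicator hBmeas).aestronglyMeasurable _ (ae_of_all _ bndB)
    -- rewrite ∫ P V as ∫ P W
    have hPVW : ∫ x, P x * V x ∂μ = ∫ x, P x * W x ∂μ :=
      integral_congr_ae (hVW.mono fun x hx => by dsimp only; rw [hx])
    -- compute ∫ P W
    have hPW_eq : ∫ x, P x * W x ∂μ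
        = L * (b * ∫ x, A.indicator W x ∂μ - a * ∫ x, B.indicator W x ∂μ) := by
      have hpt : ∀ x, P x * W x
          = L * (b * A.indicator W x - a * B.indicator W x) := by
        intro x
        simp only [hPdef]
        by_cases hx : x ∈ A
        · by_cases hy : x ∈ B
          · rw [Set.indicator_of_mem hx, Set.indicator_of_mem hy,
              Set.indicator_of_mem hx, Set.indicator_of_mem hy]; ring
          · rw [Set.indicator_of_mem hx, Set.indicator_of_notMem hy,
              Set.indicator_of_mem hx, Set.indicator_of_notMem hy]; ring
        · by_cases hy : x ∈ B
          · rw [Set.indicator_of_notMem hx, Set.indicator_of_mem hy,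
              Set.indicator_of_notMem hx, Set.indicator_of_mem hy]; ring
          · rw [Set.indicator_of_notMem hx, Set.indicator_of_notMem hy,
              Set.indicator_of_notMem hx, Set.indicator_of_notMem hy]; ring
      rw [integral_congr_ae (ae_of_all _ hpt), integral_const_mul,
        integral_sub (intAW.const_mul b) (intBW.const_mul a),
        integral_const_mul, integral_const_mul]
    -- bounds for the two set integrals
    have hIA : s * a ≤ ∫ x, A.indicator W x ∂μ := by
      rw [integral_indicator hAmeas]
      have := setIntegral_ge_of_const_le hAmeas (measure_ne_top μ A)
        (fun x hx => hx.1.le) ((integrable_indicator_iff hAmeas).mp intAW)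
      rw [smul_eq_mul, measureReal_def, ← hadef, mul_comm] at this; exact this
    have hIB : ∫ x, B.indicator W x ∂μ ≤ t * b := by
      rw [integral_indicator hBmeas]
      calc ∫ x in B, W x ∂μ ≤ ∫ _x in B, t ∂μ :=
            setIntegral_mono_on ((integrable_indicator_iff hBmeas).mp intBW)
              (integrableOn_const (measure_ne_top μ B)) hBmeas
              (fun x hx => hx.2.le)
        _ = t * b := by rw [setIntegral_const, smul_eq_mul, measureReal_def, ← hbdef]; ring
    have hPW_ge : L * (a * b * (s - t)) ≤ ∫ x, P x * W x ∂μ := by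
      rw [hPW_eq]
      have h1 : b * (s * a) ≤ b * ∫ x, A.indicator W x ∂μ :=
        mul_le_mul_of_nonneg_left hIA hb.le
      have h2 : a * ∫ x, B.indicator W x ∂μ ≤ a * (t * b) :=
        mul_le_mul_of_nonneg_left hIB ha.le
      have : a * b * (s - t) ≤ b * ∫ x, A.indicator W x ∂μ - a * ∫ x, B.indicator W x ∂μ := by
        nlinarith
      exact mul_le_mul_of_nonneg_left this hL.le
    -- put everything together
    have key : L * (a * b * δ) ≤ (∫ x, P x * V x ∂μ) - β / 2 * ∫ x, |P x| ∂μ := by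
      rw [hPVW]
      have h3 : β / 2 * ∫ x, |P x| ∂μ ≤ β / 2 * (L * b * a + L * a * b) :=
        mul_le_mul_of_nonneg_left hIabs (by linarith)
      have e1 : L * (a * b * (s - t)) - β / 2 * (L * b * a + L * a * b)
          = L * (a * b * δ) := by rw [hst]; ring
      have h4 := sub_le_sub hPW_ge h3
      rw [e1] at h4
      exact h4
    have hLval : L * (a * b * δ) = |c| + 1 := by
      rw [hLdef]
      field_simp
    linarith [le_abs_self c, key, hLval]
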